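/- arXiv:2011.11965 — 2 statements merged into one kernel-verified Lean document; each statement's English description precedes it below -/
import Mathlib

section
/- Let φ be the standard G2 3-form on ℝ⁷ and for X ∈ ℝ⁷ let P_X be the skew-symmetric endomorphism of ℝ⁷ given by Y ↦ P(X,Y) (equivalently X ⌟ φ viewed as an endomorphism). Then the operator S = Σᵢ P_{eᵢ} ∘ P_{eᵢ} (sum over an orthonormal basis) acting on the space of trace-free symmetric 2-tensors Sym²₀ℝ⁷ (via the natural derivation action of skew endomorphisms A: (A·h)(X,Y) = −h(AX,Y) − h(X,AY)) equals −14 times the identity. -/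
open Matrix BigOperators

/-- The sign of a 7-tuple of indices (Levi-Civita symbol on 7 letters). -/
noncomputable def eps7 (f : Fin 7 → Fin 7) : ℝ :=
  ∑ σ : Equiv.Perm (Fin 7), if (⇑σ = f) then ((Equiv.Perm.sign σ : ℤ) : ℝ) else 0

/-- Fully antisymmetric indicator of the triple `(a,b,c)`. -/
noncomputable def eps3 (a b c i j k : Fin 7) : ℝ :=
  ∑ σ : Equiv.Perm (Fin 3),
    if (![i, j, k] = ![a, b, c] ∘ ⇑σ) then ((Equiv.Perm.sign σ : ℤ) : ℝ) else 0

/-- The standard G2 associative 3-form on ℝ⁷ (components, 0-indexed), with the sign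
convention for which `⋆(φ ∧ ω)` has eigenvalues `-2` and `1` on 2-forms. -/
noncomputable def g2phi (i j k : Fin 7) : ℝ :=
  -(eps3 0 1 2 i j k + eps3 0 3 4 i j k + eps3 0 5 6 i j k + eps3 1 3 5 i j k
    - eps3 1 4 6 i j k - eps3 2 3 6 i j k - eps3 2 4 5 i j k)

/-! ### Auxiliary integer-valued versions and tables -/

def eps3Z (a b c i j k : Fin 7) : ℤ :=
  ∑ σ : Equiv.Perm (Fin 3),
    if (![i, j, k] = ![a, b, c] ∘ ⇑σ) then ((Equiv.Perm.sign σ : ℤ)) else 0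

def gZ (i j k : Fin 7) : ℤ :=
  -(eps3Z 0 1 2 i j k + eps3Z 0 3 4 i j k + eps3Z 0 5 6 i j k + eps3Z 1 3 5 i j k
    - eps3Z 1 4 6 i j k - eps3Z 2 3 6 i j k - eps3Z 2 4 5 i j k)

/-- Explicit table of the values `g2phi i j k`. -/
def gt : Fin 7 → Fin 7 → Fin 7 → ℤ :=
![
  ![![0, 0, 0, 0, 0, 0, 0], ![0, 0, -1, 0, 0, 0, 0], ![0, 1, 0, 0, 0, 0, 0], ![0, 0, 0, 0, -1, 0, 0], ![0, 0, 0, 1, 0, 0, 0], ![0, 0, 0, 0, 0, 0, -1], ![0, 0, 0, 0, 0, 1, 0]],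
  ![![0, 0, 1, 0, 0, 0, 0], ![0, 0, 0, 0, 0, 0, 0], ![-1, 0, 0, 0, 0, 0, 0], ![0, 0, 0, 0, 0, -1, 0], ![0, 0, 0, 0, 0, 0, 1], ![0, 0, 0, 1, 0, 0, 0], ![0, 0, 0, 0, -1, 0, 0]],
  ![![0, -1, 0, 0, 0, 0, 0], ![1, 0, 0, 0, 0, 0, 0], ![0, 0, 0, 0, 0, 0, 0], ![0, 0, 0, 0, 0, 0, 1], ![0, 0, 0, 0, 0, 1, 0], ![0, 0, 0, 0, -1, 0, 0], ![0, 0, 0, -1, 0, 0, 0]],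
  ![![0, 0, 0, 0, 1, 0, 0], ![0, 0, 0, 0, 0, 1, 0], ![0, 0, 0, 0, 0, 0, -1], ![0, 0, 0, 0, 0, 0, 0], ![-1, 0, 0, 0, 0, 0, 0], ![0, -1, 0, 0, 0, 0, 0], ![0, 0, 1, 0, 0, 0, 0]],
  ![![0, 0, 0, -1, 0, 0, 0], ![0, 0, 0, 0, 0, 0, -1], ![0, 0, 0, 0, 0, -1, 0], ![1, 0, 0, 0, 0, 0, 0], ![0, 0, 0, 0, 0, 0, 0], ![0, 0, 1, 0, 0, 0, 0], ![0, 1, 0, 0, 0, 0, 0]],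
  ![![0, 0, 0, 0, 0, 0, 1], ![0, 0, 0, -1, 0, 0, 0], ![0, 0, 0, 0, 1, 0, 0], ![0, 1, 0, 0, 0, 0, 0], ![0, 0, -1, 0, 0, 0, 0], ![0, 0, 0, 0, 0, 0, 0], ![-1, 0, 0, 0, 0, 0, 0]],
  ![![0, 0, 0, 0, 0, -1, 0], ![0, 0, 0, 0, 1, 0, 0], ![0, 0, 0, 1, 0, 0, 0], ![0, 0, -1, 0, 0, 0, 0], ![0, -1, 0, 0, 0, 0, 0], ![1, 0, 0, 0, 0, 0, 0], ![0, 0, 0, 0, 0, 0, 0]]]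

lemma eps3_cast (a b c i j k : Fin 7) : eps3 a b c i j k = ((eps3Z a b c i j k : ℤ) : ℝ) := by
  rw [eps3, eps3Z]
  push_cast [apply_ite (Int.cast : ℤ → ℝ)]
  rfl

set_option maxRecDepth 100000 in
lemma gZ_eq_gt : ∀ i j k, gZ i j k = gt i j k := by decide

lemma g2phi_eq (i j k : Fin 7) : g2phi i j k = ((gt i j k : ℤ) : ℝ) := by
  rw [← gZ_eq_gt, g2phi, gZ]
  simp only [eps3_cast]
  push_cast
  ring

set_option maxRecDepth 100000 in
lemma fact1 : ∀ k l : Fin 7, (∑ p, ∑ j, gt p j k * gt p l j) = if k = l then (-6 : ℤ) else 0 := by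
  decide

set_option maxRecDepth 100000 in
lemma fact2 : ∀ k l a b : Fin 7,
    ((∑ p, gt p k a * gt p l b) + (∑ p, gt p k b * gt p l a) : ℤ)
    = 2 * (if a = b then 1 else 0) * (if k = l then 1 else 0)
      - (if a = l then 1 else 0) * (if b = k then 1 else 0)
      - (if a = k then 1 else 0) * (if b = l then 1 else 0) := by
  decide

/-- The matrix of the cross product with the `p`-th standard basis vector. -/
noncomputable def Gr (p : Fin 7) : Matrix (Fin 7) (Fin 7) ℝ :=
  Matrix.of fun k j => ((gt p j k : ℤ) : ℝ)

lemma GrGr_sum : ∑ p, Gr p * Gr p = (-6 : ℝ) • 1 := by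
  ext k l
  have h2 : ((∑ p, ∑ j, gt p j k * gt p l j : ℤ) : ℝ) = if k = l then (-6 : ℝ) else 0 := by
    rw [fact1 k l]; split <;> norm_num
  calc (∑ p, Gr p * Gr p) k l = ∑ p, ∑ j, ((gt p j k : ℝ)) * ((gt p l j : ℝ)) := by
        simp [Matrix.sum_apply, Matrix.mul_apply, Gr]
    _ = ((∑ p, ∑ j, gt p j k * gt p l j : ℤ) : ℝ) := by push_cast; ring
    _ = ((-6 : ℝ) • (1 : Matrix (Fin 7) (Fin 7) ℝ)) k l := by
        rw [h2]; simp [Matrix.one_apply]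

lemma middle_sum (h : Matrix (Fin 7) (Fin 7) ℝ) (hs : ∀ a b, h b a = h a b)
    (htr' : ∑ a, h a a = 0) :
    ∑ p, (Gr p)ᵀ * (h * Gr p) = -h := by
  ext k l
  have lhs_eq : (∑ p, (Gr p)ᵀ * (h * Gr p)) k l
      = ∑ a, ∑ b, ((∑ p, gt p k a * gt p l b : ℤ) : ℝ) * h a b := by
    calc (∑ p, (Gr p)ᵀ * (h * Gr p)) k l
        = ∑ p, ∑ a, ∑ b, (gt p k a : ℝ) * (h a b * (gt p l b : ℝ)) := by
          simp [Matrix.sum_apply, Matrix.mul_apply, Gr, Finset.mul_sum]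
      _ = ∑ a, ∑ p, ∑ b, (gt p k a : ℝ) * (h a b * (gt p l b : ℝ)) := Finset.sum_comm
      _ = ∑ a, ∑ b, ∑ p, (gt p k a : ℝ) * (h a b * (gt p l b : ℝ)) := by
          exact Finset.sum_congr rfl fun a _ => Finset.sum_comm
      _ = ∑ a, ∑ b, ((∑ p, gt p k a * gt p l b : ℤ) : ℝ) * h a b := by
          refine Finset.sum_congr rfl fun a _ => Finset.sum_congr rfl fun b _ => ?_
          push_cast [Finset.sum_mul]
          exact Finset.sum_congr rfl fun p _ => by ring
  set S : ℝ := ∑ a, ∑ b, ((∑ p, gt p k a * gt p l b : ℤ) : ℝ) * h a b with hS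
  have hswap : S = ∑ a, ∑ b, ((∑ p, gt p k b * gt p l a : ℤ) : ℝ) * h a b := by
    calc S = ∑ a, ∑ b, ((∑ p, gt p k a * gt p l b : ℤ) : ℝ) * h b a := by
          exact Finset.sum_congr rfl fun a _ => Finset.sum_congr rfl fun b _ => by rw [hs]
      _ = ∑ b, ∑ a, ((∑ p, gt p k a * gt p l b : ℤ) : ℝ) * h b a := Finset.sum_comm
  have h2S : S + S = ∑ a, ∑ b,
      ((((∑ p, gt p k a * gt p l b) + (∑ p, gt p k b * gt p l a) : ℤ)) : ℝ) * h a b := by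
    nth_rewrite 2 [hswap]
    rw [hS, ← Finset.sum_add_distrib]
    refine Finset.sum_congr rfl fun a _ => ?_
    rw [← Finset.sum_add_distrib]
    refine Finset.sum_congr rfl fun b _ => ?_
    push_cast; ring
  have h2S' : S + S = -2 * h k l := by
    rw [h2S]
    have hv : ∀ a b : Fin 7, ((((∑ p, gt p k a * gt p l b) + (∑ p, gt p k b * gt p l a) : ℤ)) : ℝ)
        = 2 * (if a = b then (1:ℝ) else 0) * (if k = l then 1 else 0)
          - (if a = l then (1:ℝ) else 0) * (if b = k then 1 else 0)
          - (if a = k then (1:ℝ) else 0) * (if b = l then 1 else 0) := by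
      intro a b; rw [fact2 k l a b]; push_cast; ring
    simp only [hv, sub_mul, mul_ite, ite_mul, zero_mul, mul_zero, mul_one, one_mul,
      Finset.sum_sub_distrib]
    simp [Finset.sum_ite_eq, Finset.sum_ite_eq']
    have ht2 : ∑ x : Fin 7, 2 * h x x = 0 := by rw [← Finset.mul_sum, htr', mul_zero]
    rw [hs l k]
    split
    · rw [ht2]; ring
    · ring
  rw [lhs_eq]
  have hneg : (-h) k l = - h k l := by simp
  rw [hneg]; linarith

/-- The quadratic action as a bilinear map. -/
noncomputable def B2 (h : Matrix (Fin 7) (Fin 7) ℝ) :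
    Matrix (Fin 7) (Fin 7) ℝ →ₗ[ℝ] Matrix (Fin 7) (Fin 7) ℝ →ₗ[ℝ] Matrix (Fin 7) (Fin 7) ℝ :=
  LinearMap.mk₂ ℝ
    (fun X Y => Xᵀ * (Yᵀ * h) + Xᵀ * (h * Y) + (Xᵀ * h) * Y + h * (X * Y))
    (by intros m₁ m₂ n
        simp only [Matrix.transpose_add, Matrix.add_mul, Matrix.mul_add]
        abel)
    (by intros c m n
        simp only [Matrix.transpose_smul, Matrix.smul_mul, Matrix.mul_smul, smul_add])
    (by intros m n₁ n₂
        simp only [Matrix.transpose_add, Matrix.add_mul, Matrix.mul_add]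
        abel)
    (by intros c m n
        simp only [Matrix.transpose_smul, Matrix.smul_mul, Matrix.mul_smul, smul_add])

/-- For the cross product `P` of the standard G2 3-form, the operator
`S = Σᵢ P_{eᵢ} ∘ P_{eᵢ}` (sum over an orthonormal basis, with skew endomorphisms acting
on symmetric 2-tensors as derivations, `(A·h)(X,Y) = -h(AX,Y) - h(X,AY)`) equals `-14`
times the identity on trace-free symmetric 2-tensors. -/
theorem stmt3
    (act : Matrix (Fin 7) (Fin 7) ℝ → Matrix (Fin 7) (Fin 7) ℝ → Matrix (Fin 7) (Fin 7) ℝ)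
    (hact : ∀ A h, act A h = -(Aᵀ * h) - h * A)
    (Pm : (Fin 7 → ℝ) → Matrix (Fin 7) (Fin 7) ℝ)
    (hPm : ∀ v k j, Pm v k j = ∑ i, v i * g2phi i j k)
    (e : Fin 7 → (Fin 7 → ℝ))
    (he : ∀ i j, e i ⬝ᵥ e j = if i = j then (1 : ℝ) else 0)
    (h : Matrix (Fin 7) (Fin 7) ℝ)
    (hsym : hᵀ = h) (htr : Matrix.trace h = 0) :
    ∑ i, act (Pm (e i)) (act (Pm (e i)) h) = (-14 : ℝ) • h := by
  have hs : ∀ a b, h b a = h a b := fun a b => by conv_rhs => rw [← hsym, Matrix.transpose_apply]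
  have htr' : ∑ a, h a a = 0 := by simpa [Matrix.trace, Matrix.diag] using htr
  have hE : ∀ p q : Fin 7, (∑ b, e b p * e b q) = if p = q then (1:ℝ) else 0 := by
    intro p q
    have h1 : (Matrix.of e) * (Matrix.of e)ᵀ = 1 := by
      ext i j
      simpa [Matrix.mul_apply, Matrix.one_apply, dotProduct] using he i j
    have h2 : (Matrix.of e)ᵀ * (Matrix.of e) = 1 := mul_eq_one_comm.mp h1
    have h3 := congrFun (congrFun h2 p) q
    simpa [Matrix.mul_apply, Matrix.one_apply] using h3
  have hA : ∀ v : Fin 7 → ℝ, Pm v = ∑ p, v p • Gr p := by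
    intro v; ext k j
    rw [hPm]
    simp [Matrix.sum_apply, Gr, g2phi_eq]
  have hBact : ∀ A, act A (act A h) = B2 h A A := by
    intro A
    rw [hact, hact]
    simp only [B2, LinearMap.mk₂_apply]
    noncomm_ring
  have main : ∑ b, act (Pm (e b)) (act (Pm (e b)) h) = ∑ p, B2 h (Gr p) (Gr p) := by
    calc ∑ b, act (Pm (e b)) (act (Pm (e b)) h)
        = ∑ b, B2 h (Pm (e b)) (Pm (e b)) := Finset.sum_congr rfl fun b _ => hBact _
      _ = ∑ b, ∑ p, ∑ q, (e b p * e b q) • B2 h (Gr p) (Gr q) := by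
          refine Finset.sum_congr rfl fun b _ => ?_
          rw [hA]
          simp only [map_sum, LinearMap.map_smul, LinearMap.sum_apply, LinearMap.smul_apply,
            Finset.smul_sum, smul_smul]
          exact Finset.sum_comm
      _ = ∑ p, ∑ q, (∑ b, e b p * e b q) • B2 h (Gr p) (Gr q) := by
          rw [Finset.sum_comm]
          refine Finset.sum_congr rfl fun p _ => ?_
          rw [Finset.sum_comm]
          refine Finset.sum_congr rfl fun q _ => ?_
          rw [Finset.sum_smul]
      _ = ∑ p, B2 h (Gr p) (Gr p) := by
          refine Finset.sum_congr rfl fun p _ => ?_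
          simp [hE, ite_smul]
  rw [main]
  have t1 : ∑ p, (Gr p)ᵀ * ((Gr p)ᵀ * h) = (-6 : ℝ) • h := by
    calc ∑ p, (Gr p)ᵀ * ((Gr p)ᵀ * h) = (∑ p, (Gr p * Gr p)ᵀ) * h := by
          rw [Finset.sum_mul]
          exact Finset.sum_congr rfl fun p _ => by rw [Matrix.transpose_mul, Matrix.mul_assoc]
      _ = ((-6 : ℝ) • (1 : Matrix (Fin 7) (Fin 7) ℝ))ᵀ * h := by
          rw [← Matrix.transpose_sum, GrGr_sum]
      _ = (-6 : ℝ) • h := by simp [Matrix.smul_mul]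
  have t2 : ∑ p, (Gr p)ᵀ * (h * Gr p) = -h := middle_sum h hs htr'
  have t3 : ∑ p, ((Gr p)ᵀ * h) * Gr p = -h := by
    calc ∑ p, ((Gr p)ᵀ * h) * Gr p = ∑ p, (Gr p)ᵀ * (h * Gr p) :=
          Finset.sum_congr rfl fun p _ => by rw [Matrix.mul_assoc]
      _ = -h := t2
  have t4 : ∑ p, h * (Gr p * Gr p) = (-6 : ℝ) • h := by
    rw [← Finset.mul_sum, GrGr_sum]
    simp [Matrix.mul_smul]
  calc ∑ p, B2 h (Gr p) (Gr p)
      = (∑ p, (Gr p)ᵀ * ((Gr p)ᵀ * h)) + (∑ p, (Gr p)ᵀ * (h * Gr p))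
        + (∑ p, ((Gr p)ᵀ * h) * Gr p) + (∑ p, h * (Gr p * Gr p)) := by
        simp only [B2, LinearMap.mk₂_apply, Finset.sum_add_distrib]
    _ = (-14 : ℝ) • h := by
        rw [t1, t2, t3, t4]
        ext k l
        simp [Matrix.add_apply, Matrix.smul_apply, Matrix.neg_apply]
        ring
end

section
/- Let φ be the standard G2 3-form on ℝ⁷ with associated cross product P defined by g(P(X,Y),Z) = φ(X,Y,Z), and let {eᵢ} be an orthonormal basis. Then: (1) X ⌟ φ = −(1/2) Σᵢ eᵢ ∧ P(eᵢ,X) as 2-forms (identifying vectors and covectors), and (2) ⋆φ = −(1/6) Σᵢ (eᵢ ⌟ φ) ∧ (eᵢ ⌟ φ). -/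
open Matrix BigOperators

/-! ### Auxiliary integer-valued combinatorial machinery -/

set_option maxRecDepth 100000

/-- Kronecker delta. -/
def dl (a b : Fin 7) : ℤ := if a = b then 1 else 0

/-- Fast antisymmetric indicator of a triple. -/
def e3 (a b c i j k : Fin 7) : ℤ :=
  dl a i * (dl b j * dl c k - dl b k * dl c j) + dl a j * (dl b k * dl c i - dl b i * dl c k)
    + dl a k * (dl b i * dl c j - dl b j * dl c i)

/-- Fast integer table of the G2 3-form. -/
def gT (i j k : Fin 7) : ℤ :=
  -(e3 0 1 2 i j k + e3 0 3 4 i j k + e3 0 5 6 i j k + e3 1 3 5 i j k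
    - e3 1 4 6 i j k - e3 2 3 6 i j k - e3 2 4 5 i j k)

set_option maxHeartbeats 4000000 in
lemma gZ_eq_gT : ∀ i j k, gZ i j k = gT i j k := by decide

lemma gT_swap12 : ∀ a b c, gT b a c = - gT a b c := by decide
lemma gT_swap23 : ∀ a b c, gT a c b = - gT a b c := by decide

/-- pairwise comparison factor -/
def sfac (u v : Fin 7) : ℤ := if u < v then 1 else if v < u then -1 else 0

/-- Explicit product formula for the Levi-Civita symbol on 7 letters. -/
def sign7 (a b c d e f g : Fin 7) : ℤ :=
  sfac a b * sfac a c * sfac a d * sfac a e * sfac a f * sfac a g *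
  sfac b c * sfac b d * sfac b e * sfac b f * sfac b g *
  sfac c d * sfac c e * sfac c f * sfac c g *
  sfac d e * sfac d f * sfac d g *
  sfac e f * sfac e g * sfac f g

/-- Levi-Civita as a product over ordered pairs. -/
def mySign (f : Fin 7 → Fin 7) : ℤ :=
  ∏ a : Fin 7, ∏ b : Fin 7, if a < b then sfac (f a) (f b) else 1

/-- Integer version of `eps7`. -/
def eps7Z (f : Fin 7 → Fin 7) : ℤ :=
  ∑ σ : Equiv.Perm (Fin 7), if (⇑σ = f) then ((Equiv.Perm.sign σ : ℤ)) else 0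

lemma sign_eq_signAux (σ : Equiv.Perm (Fin 7)) :
    ((Equiv.Perm.sign σ : ℤˣ)) = Equiv.Perm.signAux σ := by
  have key : ∀ (s : Multiset (Fin 7)) (hs : ∀ x, x ∈ s),
      Equiv.Perm.signAux3 σ hs = Equiv.Perm.signAux σ := by
    intro s
    induction s using Quotient.inductionOn with
    | h l =>
      intro hs
      have h2 := Equiv.Perm.signAux_eq_signAux2 l σ (Equiv.refl (Fin 7)) (fun x _ => hs x)
      have h3 : ((Equiv.refl (Fin 7)).symm.trans σ).trans (Equiv.refl (Fin 7)) = σ := by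
        ext x; simp
      rw [h3] at h2
      exact h2.symm
  show Equiv.Perm.signAux3 σ Finset.mem_univ = _
  exact key _ _

lemma mySign_perm (σ : Equiv.Perm (Fin 7)) : mySign ⇑σ = ((Equiv.Perm.sign σ : ℤˣ) : ℤ) := by
  rw [sign_eq_signAux]
  unfold Equiv.Perm.signAux
  rw [show ((↑(∏ x ∈ Equiv.Perm.finPairsLT 7, if σ x.1 ≤ σ x.2 then (-1 : ℤˣ) else 1) : ℤ))
      = ∏ x ∈ Equiv.Perm.finPairsLT 7, ((if σ x.1 ≤ σ x.2 then (-1 : ℤˣ) else 1 : ℤˣ) : ℤ) by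
    rw [← Units.coeHom_apply, map_prod]; rfl]
  unfold Equiv.Perm.finPairsLT
  rw [Finset.prod_sigma]
  unfold mySign
  rw [Finset.prod_comm]
  refine Finset.prod_congr rfl fun b _ => ?_
  rw [show (∏ a : Fin 7, if a < b then sfac (σ a) (σ b) else 1)
      = ∏ a ∈ Finset.univ.filter (fun a => a < b), sfac (σ a) (σ b) from
    (Finset.prod_filter _ _).symm]
  refine Finset.prod_congr ?_ fun a ha => ?_
  · ext y
    simp only [Finset.mem_filter, Finset.mem_univ, true_and, Finset.mem_attachFin,
      Finset.mem_range, Fin.lt_def]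
  · have hab : a < b := by
      have := (Finset.mem_attachFin _).mp ha
      exact Fin.lt_def.mpr (Finset.mem_range.mp this)
    have hne : σ a ≠ σ b := fun h => absurd (σ.injective h) (ne_of_lt hab)
    show sfac (σ a) (σ b) = ((if σ b ≤ σ a then (-1 : ℤˣ) else 1 : ℤˣ) : ℤ)
    rcases lt_trichotomy (σ a) (σ b) with h | h | h
    · rw [if_neg (not_le.mpr h)]
      simp [sfac, h]
    · exact absurd h hne
    · rw [if_pos (le_of_lt h)]
      simp [sfac, h, asymm h]

lemma mySign_not_inj {f : Fin 7 → Fin 7} (hf : ¬ Function.Injective f) : mySign f = 0 := by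
  have : ∃ a b, a < b ∧ f a = f b := by
    simp only [Function.Injective, not_forall] at hf
    obtain ⟨a, b, hab, hne⟩ := hf
    rcases lt_or_gt_of_ne hne with h | h
    · exact ⟨a, b, h, hab⟩
    · exact ⟨b, a, h, hab.symm⟩
  obtain ⟨a, b, hab, hfab⟩ := this
  unfold mySign
  apply Finset.prod_eq_zero (Finset.mem_univ a)
  apply Finset.prod_eq_zero (Finset.mem_univ b)
  rw [if_pos hab]
  simp [sfac, hfab]

lemma eps7Z_eq_mySign (f : Fin 7 → Fin 7) : eps7Z f = mySign f := by
  by_cases hf : Function.Injective f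
  · have hb : Function.Bijective f := Finite.injective_iff_bijective.mp hf
    set σ := Equiv.ofBijective f hb with hσ
    have hc : ⇑σ = f := rfl
    unfold eps7Z
    rw [Finset.sum_eq_single σ]
    · rw [if_pos hc, ← hc, mySign_perm]
    · intro τ _ hτ
      rw [if_neg]
      intro h
      exact hτ (Equiv.coe_fn_injective (h.trans hc.symm))
    · intro h
      exact absurd (Finset.mem_univ σ) h
  · rw [mySign_not_inj hf]
    unfold eps7Z
    rw [Finset.sum_eq_zero]
    intro τ _
    rw [if_neg]
    intro h
    exact hf (h ▸ τ.injective)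

lemma eps7Z_comp_swap (f : Fin 7 → Fin 7) (a b : Fin 7) (hab : a ≠ b) :
    eps7Z (f ∘ ⇑(Equiv.swap a b)) = - eps7Z f := by
  unfold eps7Z
  rw [← Fintype.sum_equiv (Equiv.mulRight (Equiv.swap a b))
    (fun τ => if ⇑τ = f then -((Equiv.Perm.sign τ : ℤˣ) : ℤ) else 0)
    (fun τ => if ⇑τ = f ∘ ⇑(Equiv.swap a b) then ((Equiv.Perm.sign τ : ℤˣ) : ℤ) else 0)]
  · rw [← Finset.sum_neg_distrib]
    refine Finset.sum_congr rfl fun τ _ => ?_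
    split <;> simp
  · intro τ
    have hcoe : ⇑(Equiv.mulRight (Equiv.swap a b) τ) = ⇑τ ∘ ⇑(Equiv.swap a b) := by
      ext x; rfl
    have hiff : (⇑τ ∘ ⇑(Equiv.swap a b) = f ∘ ⇑(Equiv.swap a b)) ↔ ⇑τ = f := by
      constructor
      · intro h
        funext x
        have := congrFun h (Equiv.swap a b x)
        simpa using this
      · intro h; rw [h]
    rw [hcoe, if_congr hiff rfl rfl]
    split
    · rw [show Equiv.mulRight (Equiv.swap a b) τ = τ * Equiv.swap a b from rfl,
        Equiv.Perm.sign_mul, Equiv.Perm.sign_swap hab]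
      simp
    · rfl

lemma mySign_vec (i j k l m o p : Fin 7) :
    mySign ![i, j, k, l, m, o, p] = sign7 i j k l m o p := by
  show (∏ a : Fin 7, ∏ b : Fin 7, _) = _
  simp (config := { decide := true }) only [mySign, sign7, Fin.prod_univ_seven,
    Matrix.cons_val_zero, Matrix.cons_val_one, Matrix.head_cons, Matrix.cons_val_succ,
    if_true, if_false,
    show (![i,j,k,l,m,o,p] : Fin 7 → Fin 7) 2 = k from rfl,
    show (![i,j,k,l,m,o,p] : Fin 7 → Fin 7) 3 = l from rfl,
    show (![i,j,k,l,m,o,p] : Fin 7 → Fin 7) 4 = m from rfl,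
    show (![i,j,k,l,m,o,p] : Fin 7 → Fin 7) 5 = o from rfl,
    show (![i,j,k,l,m,o,p] : Fin 7 → Fin 7) 6 = p from rfl]
  ring

lemma sign7_s34 (i j k l m o p : Fin 7) : sign7 i j k m l o p = - sign7 i j k l m o p := by
  rw [← mySign_vec, ← mySign_vec, ← eps7Z_eq_mySign, ← eps7Z_eq_mySign,
    show ![i,j,k,m,l,o,p] = ![i,j,k,l,m,o,p] ∘ ⇑(Equiv.swap 3 4) by funext t; fin_cases t <;> rfl]
  exact eps7Z_comp_swap _ _ _ (by decide)

lemma sign7_s45 (i j k l m o p : Fin 7) : sign7 i j k l o m p = - sign7 i j k l m o p := by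
  rw [← mySign_vec, ← mySign_vec, ← eps7Z_eq_mySign, ← eps7Z_eq_mySign,
    show ![i,j,k,l,o,m,p] = ![i,j,k,l,m,o,p] ∘ ⇑(Equiv.swap 4 5) by funext t; fin_cases t <;> rfl]
  exact eps7Z_comp_swap _ _ _ (by decide)

lemma sign7_s56 (i j k l m o p : Fin 7) : sign7 i j k l m p o = - sign7 i j k l m o p := by
  rw [← mySign_vec, ← mySign_vec, ← eps7Z_eq_mySign, ← eps7Z_eq_mySign,
    show ![i,j,k,l,m,p,o] = ![i,j,k,l,m,o,p] ∘ ⇑(Equiv.swap 5 6) by funext t; fin_cases t <;> rfl]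
  exact eps7Z_comp_swap _ _ _ (by decide)

/-! ### The two sides of the coassociative identity, over ℤ -/

def AZ (l m o p : Fin 7) : ℤ :=
  ∑ i, ∑ j, ∑ k, sign7 i j k l m o p * gT i j k

def BZ (l m o p : Fin 7) : ℤ :=
  ∑ t, (gT t l m * gT t o p - gT t l o * gT t m p + gT t l p * gT t m o)

set_option maxHeartbeats 16000000 in
lemma sorted_case : ∀ l m o p : Fin 7, l < m → m < o → o < p →
    AZ l m o p + 2 * BZ l m o p = 0 := by decide

lemma AZ_s1 (l m o p : Fin 7) : AZ m l o p = - AZ l m o p := by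
  unfold AZ
  rw [← Finset.sum_neg_distrib]
  refine Finset.sum_congr rfl fun i _ => ?_
  rw [← Finset.sum_neg_distrib]
  refine Finset.sum_congr rfl fun j _ => ?_
  rw [← Finset.sum_neg_distrib]
  refine Finset.sum_congr rfl fun k _ => ?_
  rw [sign7_s34]; ring

lemma AZ_s2 (l m o p : Fin 7) : AZ l o m p = - AZ l m o p := by
  unfold AZ
  rw [← Finset.sum_neg_distrib]
  refine Finset.sum_congr rfl fun i _ => ?_
  rw [← Finset.sum_neg_distrib]
  refine Finset.sum_congr rfl fun j _ => ?_
  rw [← Finset.sum_neg_distrib]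
  refine Finset.sum_congr rfl fun k _ => ?_
  rw [sign7_s45]; ring

lemma AZ_s3 (l m o p : Fin 7) : AZ l m p o = - AZ l m o p := by
  unfold AZ
  rw [← Finset.sum_neg_distrib]
  refine Finset.sum_congr rfl fun i _ => ?_
  rw [← Finset.sum_neg_distrib]
  refine Finset.sum_congr rfl fun j _ => ?_
  rw [← Finset.sum_neg_distrib]
  refine Finset.sum_congr rfl fun k _ => ?_
  rw [sign7_s56]; ring

lemma BZ_s1 (l m o p : Fin 7) : BZ m l o p = - BZ l m o p := by
  unfold BZ
  rw [← Finset.sum_neg_distrib]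
  refine Finset.sum_congr rfl fun t _ => ?_
  rw [gT_swap23 t l m]; ring

lemma BZ_s2 (l m o p : Fin 7) : BZ l o m p = - BZ l m o p := by
  unfold BZ
  rw [← Finset.sum_neg_distrib]
  refine Finset.sum_congr rfl fun t _ => ?_
  rw [gT_swap23 t m o]; ring

lemma BZ_s3 (l m o p : Fin 7) : BZ l m p o = - BZ l m o p := by
  unfold BZ
  rw [← Finset.sum_neg_distrib]
  refine Finset.sum_congr rfl fun t _ => ?_
  rw [gT_swap23 t o p]; ring

/-! ### Alternating extension -/

def N4 (l m o p : Fin 7) : ℕ :=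
  (if m < l then 1 else 0) + (if o < l then 1 else 0) + (if p < l then 1 else 0)
    + (if o < m then 1 else 0) + (if p < m then 1 else 0) + (if p < o then 1 else 0)

lemma N4_dec1 {l m : Fin 7} (o p : Fin 7) (h : m < l) : N4 m l o p < N4 l m o p := by
  simp only [N4, if_pos h, if_neg (asymm h)]
  omega

lemma N4_dec2 {m o : Fin 7} (l p : Fin 7) (h : o < m) : N4 l o m p < N4 l m o p := by
  simp only [N4, if_pos h, if_neg (asymm h)]
  omega

lemma N4_dec3 {o p : Fin 7} (l m : Fin 7) (h : p < o) : N4 l m p o < N4 l m o p := by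
  simp only [N4, if_pos h, if_neg (asymm h)]
  omega

lemma ext4 (D : Fin 7 → Fin 7 → Fin 7 → Fin 7 → ℤ)
    (s1 : ∀ l m o p, D m l o p = - D l m o p)
    (s2 : ∀ l m o p, D l o m p = - D l m o p)
    (s3 : ∀ l m o p, D l m p o = - D l m o p)
    (h0 : ∀ l m o p, l < m → m < o → o < p → D l m o p = 0) :
    ∀ l m o p, D l m o p = 0 := by
  have z1 : ∀ l o p, D l l o p = 0 := fun l o p => by have := s1 l l o p; omega
  have z2 : ∀ l m p, D l m m p = 0 := fun l m p => by have := s2 l m m p; omega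
  have z3 : ∀ l m o, D l m o o = 0 := fun l m o => by have := s3 l m o o; omega
  suffices H : ∀ n l m o p, N4 l m o p ≤ n → D l m o p = 0 by
    intro l m o p; exact H _ l m o p le_rfl
  intro n
  induction n using Nat.strong_induction_on with
  | _ n ih =>
    intro l m o p hN
    rcases lt_trichotomy l m with h1 | h1 | h1
    · rcases lt_trichotomy m o with h2 | h2 | h2
      · rcases lt_trichotomy o p with h3 | h3 | h3
        · exact h0 l m o p h1 h2 h3
        · rw [h3]; exact z3 l m p
        · have hlt := N4_dec3 l m h3
          have := ih (N4 l m p o) (lt_of_lt_of_le hlt hN) l m p o le_rfl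
          rw [s3] at this; omega
      · rw [← h2]; exact z2 l m p
      · have hlt := N4_dec2 l p h2
        have := ih (N4 l o m p) (lt_of_lt_of_le hlt hN) l o m p le_rfl
        rw [s2] at this; omega
    · rw [← h1]; exact z1 l o p
    · have hlt := N4_dec1 o p h1
      have := ih (N4 m l o p) (lt_of_lt_of_le hlt hN) m l o p le_rfl
      rw [s1] at this; omega

lemma main_identity : ∀ l m o p : Fin 7, AZ l m o p + 2 * BZ l m o p = 0 := by
  apply ext4 (fun l m o p => AZ l m o p + 2 * BZ l m o p)
  · intro l m o p; rw [AZ_s1, BZ_s1]; ring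
  · intro l m o p; rw [AZ_s2, BZ_s2]; ring
  · intro l m o p; rw [AZ_s3, BZ_s3]; ring
  · exact sorted_case

lemma g2phi_cast (i j k : Fin 7) : g2phi i j k = ((gT i j k : ℤ) : ℝ) := by
  rw [← gZ_eq_gT i j k]
  unfold g2phi gZ
  rw [eps3_cast, eps3_cast, eps3_cast, eps3_cast, eps3_cast, eps3_cast, eps3_cast]
  push_cast
  ring

lemma eps7_cast (f : Fin 7 → Fin 7) : eps7 f = ((eps7Z f : ℤ) : ℝ) := by
  unfold eps7 eps7Z
  rw [Int.cast_sum]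
  exact Finset.sum_congr rfl fun σ _ => by split <;> simp

lemma g2phi_s12 (a b c : Fin 7) : g2phi b a c = - g2phi a b c := by
  rw [g2phi_cast, g2phi_cast, gT_swap12]
  push_cast
  ring

lemma g2phi_s23 (a b c : Fin 7) : g2phi a c b = - g2phi a b c := by
  rw [g2phi_cast, g2phi_cast, gT_swap23]
  push_cast
  ring

/-- For the standard G2 3-form `φ` with cross product `P`
(`g(P(X,Y),Z) = φ(X,Y,Z)`) and any orthonormal basis `{eᵢ}` of ℝ⁷:
(1) `X ⌟ φ = -(1/2) Σᵢ eᵢ ∧ P(eᵢ, X)` as 2-forms, and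
(2) `⋆φ = -(1/6) Σᵢ (eᵢ ⌟ φ) ∧ (eᵢ ⌟ φ)` (both sides written in components; the Hodge
star is expressed through the Levi-Civita symbol). -/
theorem stmt17
    (P : (Fin 7 → ℝ) → (Fin 7 → ℝ) → (Fin 7 → ℝ))
    (hP : ∀ X Y k, P X Y k = ∑ i, ∑ j, X i * Y j * g2phi i j k)
    (e : Fin 7 → (Fin 7 → ℝ))
    (he : ∀ i j, e i ⬝ᵥ e j = if i = j then (1 : ℝ) else 0)
    (α : Fin 7 → Fin 7 → Fin 7 → ℝ)
    (hα : ∀ i l m, α i l m = ∑ t, e i t * g2phi t l m) :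
    (∀ (X : Fin 7 → ℝ) (j k : Fin 7),
      (∑ i, X i * g2phi i j k)
        = -(1 / 2) * ∑ i, (e i j * P (e i) X k - e i k * P (e i) X j)) ∧
    (∀ l m o p : Fin 7,
      (1 / 6) * (∑ i, ∑ j, ∑ k, eps7 ![i, j, k, l, m, o, p] * g2phi i j k)
        = -(1 / 6) * ∑ i,
            2 * (α i l m * α i o p - α i l o * α i m p + α i l p * α i m o)) := by
  -- column orthonormality
  have hM : (Matrix.of e) * (Matrix.of e)ᵀ = 1 := by
    ext i j
    have := he i j
    simpa [Matrix.mul_apply, dotProduct, Matrix.one_apply] using this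
  have hMt := mul_eq_one_comm.mp hM
  have col : ∀ s t, (∑ i, e i s * e i t) = if s = t then (1:ℝ) else 0 := by
    intro s t
    have := congrFun (congrFun hMt s) t
    simpa [Matrix.mul_apply, Matrix.transpose_apply, Matrix.one_apply] using this
  have hcollapse : ∀ (u v : Fin 7 → ℝ),
      ∑ i, (∑ s, e i s * u s) * (∑ t, e i t * v t) = ∑ t, u t * v t := by
    intro u v
    calc ∑ i, (∑ s, e i s * u s) * (∑ t, e i t * v t)
        = ∑ i, ∑ s, ∑ t, (e i s * u s) * (e i t * v t) := by
          refine Finset.sum_congr rfl fun i _ => ?_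
          rw [Finset.sum_mul_sum]
      _ = ∑ s, ∑ t, ∑ i, (e i s * u s) * (e i t * v t) := by
          rw [Finset.sum_comm]
          exact Finset.sum_congr rfl fun s _ => Finset.sum_comm
      _ = ∑ s, ∑ t, (u s * v t) * ∑ i, e i s * e i t := by
          refine Finset.sum_congr rfl fun s _ => Finset.sum_congr rfl fun t _ => ?_
          rw [Finset.mul_sum]
          exact Finset.sum_congr rfl fun i _ => by ring
      _ = ∑ s, ∑ t, (u s * v t) * (if s = t then 1 else 0) := by
          refine Finset.sum_congr rfl fun s _ => Finset.sum_congr rfl fun t _ => ?_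
          rw [col s t]
      _ = ∑ t, u t * v t := by
          refine Finset.sum_congr rfl fun s _ => ?_
          simp [mul_ite, Finset.sum_ite_eq]
  constructor
  · -- Part 1
    intro X j k
    have hone : ∀ (j' k' : Fin 7), ∑ i, e i j' * P (e i) X k'
        = ∑ b, X b * g2phi j' b k' := by
      intro j' k'
      have base := hcollapse (fun s => if s = j' then (1:ℝ) else 0)
        (fun a => ∑ b, X b * g2phi a b k')
      have lhs_eq : ∑ i, e i j' * P (e i) X k'
          = ∑ i, (∑ s, e i s * (if s = j' then (1:ℝ) else 0))
              * (∑ t, e i t * ∑ b, X b * g2phi t b k') := by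
        refine Finset.sum_congr rfl fun i _ => ?_
        congr 1
        · simp [mul_ite, Finset.sum_ite_eq']
        · rw [hP]
          refine Finset.sum_congr rfl fun a _ => ?_
          rw [Finset.mul_sum]
          exact Finset.sum_congr rfl fun b _ => by ring
      rw [lhs_eq, base]
      have : ∀ t : Fin 7, (if t = j' then (1:ℝ) else 0) * (∑ b, X b * g2phi t b k')
          = if t = j' then (∑ b, X b * g2phi t b k') else 0 := by
        intro t; split <;> simp
      rw [Finset.sum_congr rfl fun t _ => this t, Finset.sum_ite_eq' Finset.univ j'
        (fun t => ∑ b, X b * g2phi t b k')]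
      simp
    have h1 := hone j k
    have h2 := hone k j
    have split_sum : ∑ i, (e i j * P (e i) X k - e i k * P (e i) X j)
        = ∑ b, (X b * g2phi j b k - X b * g2phi k b j) := by
      rw [Finset.sum_sub_distrib, h1, h2, ← Finset.sum_sub_distrib]
    rw [split_sum, Finset.mul_sum]
    refine Finset.sum_congr rfl fun b _ => ?_
    rw [g2phi_s12 b j k, g2phi_s12 b k j, g2phi_s23 b j k]
    ring
  · -- Part 2
    intro l m o p
    have hαα : ∀ a b c d : Fin 7, ∑ i, α i a b * α i c d
        = ∑ t, g2phi t a b * g2phi t c d := by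
      intro a b c d
      calc ∑ i, α i a b * α i c d
          = ∑ i, (∑ s, e i s * g2phi s a b) * (∑ t, e i t * g2phi t c d) := by
            refine Finset.sum_congr rfl fun i _ => ?_
            rw [hα, hα]
        _ = ∑ t, g2phi t a b * g2phi t c d := hcollapse _ _
    have hL : (∑ i, ∑ j, ∑ k, eps7 ![i, j, k, l, m, o, p] * g2phi i j k)
        = ((AZ l m o p : ℤ) : ℝ) := by
      unfold AZ
      push_cast
      refine Finset.sum_congr rfl fun i _ => Finset.sum_congr rfl fun j _ =>
        Finset.sum_congr rfl fun k _ => ?_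
      rw [eps7_cast, eps7Z_eq_mySign, mySign_vec, g2phi_cast]
      all_goals push_cast
      all_goals ring
    have hB : ((BZ l m o p : ℤ) : ℝ)
        = ∑ t, (g2phi t l m * g2phi t o p - g2phi t l o * g2phi t m p
            + g2phi t l p * g2phi t m o) := by
      unfold BZ
      push_cast
      refine Finset.sum_congr rfl fun t _ => ?_
      rw [g2phi_cast, g2phi_cast, g2phi_cast, g2phi_cast, g2phi_cast, g2phi_cast]
      all_goals push_cast
      all_goals ring
    have hRHS : ∑ i, 2 * (α i l m * α i o p - α i l o * α i m p + α i l p * α i m o)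
        = 2 * (((BZ l m o p : ℤ) : ℝ)) := by
      rw [hB]
      rw [← Finset.mul_sum]
      congr 1
      rw [Finset.sum_add_distrib, Finset.sum_sub_distrib, hαα, hαα, hαα,
        ← Finset.sum_sub_distrib, ← Finset.sum_add_distrib]
    have hAB : AZ l m o p = -2 * BZ l m o p := by
      have := main_identity l m o p
      omega
    rw [hL, hRHS, hAB]
    push_cast
    ring
end
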